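/- arXiv:1802.06123 — 4 statements merged into one kernel-verified Lean document; each statement's English description precedes it below -/
import Mathlib

section
/- Suppose Q = A_P D_V + (A_V D_P)^T has the boundary structure Q = -e_L p_Lᵀ + e_R p_Rᵀ, where e_L, e_R are the first and last standard basis vectors of ℝ^{N_P} and p_L, p_R ∈ ℝ^{N_V}. Then along solutions of the penalized system A_P P' = -A_P D_V V, A_V V' = -A_V D_P P + σ_L p_L (e_Lᵀ P) + σ_R p_R (e_Rᵀ P) with σ_L = -1 and σ_R = 1, the discrete energy E = (1/2)Pᵀ A_P P + (1/2)Vᵀ A_V V is constant in time. -/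
open Matrix

private lemma quad_deriv {n : ℕ} (A : Matrix (Fin n) (Fin n) ℝ) (f f' : ℝ → Fin n → ℝ)
    (hf : ∀ t, HasDerivAt f (f' t) t) (t : ℝ) :
    HasDerivAt (fun t => f t ⬝ᵥ A.mulVec (f t))
      (f' t ⬝ᵥ A.mulVec (f t) + f t ⬝ᵥ A.mulVec (f' t)) t := by
  have hfi : ∀ i, HasDerivAt (fun t => f t i) (f' t i) t :=
    fun i => hasDerivAt_pi.mp (hf t) i
  have hterm : ∀ i : Fin n, HasDerivAt (fun t => f t i * A.mulVec (f t) i)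
      (f' t i * A.mulVec (f t) i + f t i * A.mulVec (f' t) i) t := by
    intro i
    have hAv : HasDerivAt (fun t => A.mulVec (f t) i) (A.mulVec (f' t) i) t := by
      simp only [Matrix.mulVec, dotProduct]
      exact HasDerivAt.fun_sum fun j _ => (hfi j).const_mul (A i j)
    exact (hfi i).mul hAv
  have := HasDerivAt.fun_sum (fun i (_ : i ∈ Finset.univ) => hterm i)
  simpa [dotProduct, Finset.sum_add_distrib] using this

private lemma symm_dot {n : ℕ} {A : Matrix (Fin n) (Fin n) ℝ} (hA : Aᵀ = A)
    (x y : Fin n → ℝ) : x ⬝ᵥ A.mulVec y = y ⬝ᵥ A.mulVec x := by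
  rw [dotProduct_mulVec, ← Matrix.vecMul_transpose, hA, dotProduct_comm]

private lemma vecMulVec_mulVec' {m n : ℕ} (x : Fin m → ℝ) (y v : Fin n → ℝ) :
    (vecMulVec x y).mulVec v = (y ⬝ᵥ v) • x := by
  funext i
  simp only [Matrix.vecMulVec, Matrix.mulVec, dotProduct, Matrix.of_apply,
    Pi.smul_apply, smul_eq_mul, Finset.mul_sum, Finset.sum_mul]
  exact Finset.sum_congr rfl fun j _ => by ring

/-- Energy conservation for the SAT-penalized 1D boundary system with σL = -1, σR = 1. -/
theorem stmt2 {NP NV : ℕ}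
    (AP : Matrix (Fin (NP + 1)) (Fin (NP + 1)) ℝ) (AV : Matrix (Fin NV) (Fin NV) ℝ)
    (DV : Matrix (Fin (NP + 1)) (Fin NV) ℝ) (DP : Matrix (Fin NV) (Fin (NP + 1)) ℝ)
    (hAP : AP.PosDef) (hAV : AV.PosDef)
    (pL pR : Fin NV → ℝ)
    (eL eR : Fin (NP + 1) → ℝ)
    (heL : eL = Pi.single 0 1) (heR : eR = Pi.single (Fin.last NP) 1)
    (hQ : AP * DV + (AV * DP)ᵀ = -vecMulVec eL pL + vecMulVec eR pR)
    (σL σR : ℝ) (hσL : σL = -1) (hσR : σR = 1)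
    (P : ℝ → Fin (NP + 1) → ℝ) (V : ℝ → Fin NV → ℝ)
    (P' : ℝ → Fin (NP + 1) → ℝ) (V' : ℝ → Fin NV → ℝ)
    (hP : ∀ t, HasDerivAt P (P' t) t) (hV : ∀ t, HasDerivAt V (V' t) t)
    (hPode : ∀ t, AP.mulVec (P' t) = -((AP * DV).mulVec (V t)))
    (hVode : ∀ t, AV.mulVec (V' t) =
      -((AV * DP).mulVec (P t)) + (σL * (eL ⬝ᵥ P t)) • pL + (σR * (eR ⬝ᵥ P t)) • pR)
    (E : ℝ → ℝ)
    (hE : ∀ t, E t = (1/2) * (P t ⬝ᵥ AP.mulVec (P t)) + (1/2) * (V t ⬝ᵥ AV.mulVec (V t))) :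
    ∀ t s, E t = E s := by
  have hAPs : APᵀ = AP := by
    have := hAP.1
    simpa [Matrix.IsHermitian, Matrix.conjTranspose_eq_transpose_of_trivial] using this
  have hAVs : AVᵀ = AV := by
    have := hAV.1
    simpa [Matrix.IsHermitian, Matrix.conjTranspose_eq_transpose_of_trivial] using this
  have hEeq : E = fun t => (1/2) * (P t ⬝ᵥ AP.mulVec (P t)) +
      (1/2) * (V t ⬝ᵥ AV.mulVec (V t)) := funext hE
  -- derivative of E is zero
  have hE' : ∀ t, HasDerivAt E 0 t := by
    intro t
    have h1 := ((quad_deriv AP P P' hP t).const_mul (1/2 : ℝ)).add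
      ((quad_deriv AV V V' hV t).const_mul (1/2 : ℝ))
    rw [hEeq]
    refine h1.congr_deriv ?_
    -- show the derivative expression is zero
    have e1 : P t ⬝ᵥ AP.mulVec (P' t) = P' t ⬝ᵥ AP.mulVec (P t) := symm_dot hAPs _ _
    have e2 : V t ⬝ᵥ AV.mulVec (V' t) = V' t ⬝ᵥ AV.mulVec (V t) := symm_dot hAVs _ _
    have e3 : P' t ⬝ᵥ AP.mulVec (P t) = P t ⬝ᵥ AP.mulVec (P' t) := (symm_dot hAPs _ _)
    have e4 : V' t ⬝ᵥ AV.mulVec (V t) = V t ⬝ᵥ AV.mulVec (V' t) := (symm_dot hAVs _ _)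
    have key : P t ⬝ᵥ AP.mulVec (P' t) + V t ⬝ᵥ AV.mulVec (V' t) = 0 := by
      rw [hPode t, hVode t]
      have hVP : V t ⬝ᵥ ((AV * DP).mulVec (P t)) = P t ⬝ᵥ ((AV * DP)ᵀ.mulVec (V t)) := by
        rw [dotProduct_mulVec, ← Matrix.mulVec_transpose, dotProduct_comm]
      have hcomb : P t ⬝ᵥ ((AP * DV).mulVec (V t)) + P t ⬝ᵥ ((AV * DP)ᵀ.mulVec (V t))
          = P t ⬝ᵥ ((AP * DV + (AV * DP)ᵀ).mulVec (V t)) := by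
        rw [Matrix.add_mulVec, dotProduct_add]
      have hQv : P t ⬝ᵥ ((AP * DV + (AV * DP)ᵀ).mulVec (V t))
          = -((pL ⬝ᵥ V t) * (P t ⬝ᵥ eL)) + (pR ⬝ᵥ V t) * (P t ⬝ᵥ eR) := by
        rw [hQ, Matrix.add_mulVec, Matrix.neg_mulVec, vecMulVec_mulVec', vecMulVec_mulVec']
        simp [dotProduct_smul, mul_comm]
      simp only [dotProduct_neg, dotProduct_add, dotProduct_smul,
        hVP, hσL, hσR, smul_eq_mul]
      have : P t ⬝ᵥ ((AP * DV).mulVec (V t)) =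
          -((pL ⬝ᵥ V t) * (P t ⬝ᵥ eL)) + (pR ⬝ᵥ V t) * (P t ⬝ᵥ eR)
          - P t ⬝ᵥ ((AV * DP)ᵀ.mulVec (V t)) := by
        rw [← hQv] at *; linarith [hcomb]
      rw [this]
      have c1 : eL ⬝ᵥ P t = P t ⬝ᵥ eL := dotProduct_comm _ _
      have c2 : eR ⬝ᵥ P t = P t ⬝ᵥ eR := dotProduct_comm _ _
      have c3 : V t ⬝ᵥ pL = pL ⬝ᵥ V t := dotProduct_comm _ _
      have c4 : V t ⬝ᵥ pR = pR ⬝ᵥ V t := dotProduct_comm _ _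
      rw [c1, c2, c3, c4]
      ring
    linarith [key, e1, e2]
  intro t s
  exact is_const_of_deriv_eq_zero (fun x => (hE' x).differentiableAt)
    (fun x => (hE' x).deriv) t s
end

section
/- If A_P, A_U, A_V are symmetric positive definite and Q_y := A_P D_y^V + (A_V D_y^P)ᵀ = 0 and Q_x := A_P D_x^U + (A_U D_x^P)ᵀ = 0 (e.g. under periodic coupling in both directions), then along any solution of A_P P' = -A_P D_x^U U - A_P D_y^V V, A_U U' = -A_U D_x^P P, A_V V' = -A_V D_y^P P, the energy E = (1/2)(Pᵀ A_P P + Uᵀ A_U U + Vᵀ A_V V) is constant. -/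
open Matrix

lemma dot_hasDerivAt {n m : ℕ} (M : Matrix (Fin n) (Fin m) ℝ)
    {f : ℝ → Fin n → ℝ} {g : ℝ → Fin m → ℝ} {f' : Fin n → ℝ} {g' : Fin m → ℝ} {t : ℝ}
    (hf : HasDerivAt f f' t) (hg : HasDerivAt g g' t) :
    HasDerivAt (fun t => f t ⬝ᵥ M.mulVec (g t))
      (f' ⬝ᵥ M.mulVec (g t) + f t ⬝ᵥ M.mulVec g') t := by
  have hfi : ∀ i, HasDerivAt (fun s => f s i) (f' i) t := fun i =>
    (hasDerivAt_pi.mp hf) i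
  have hgj : ∀ j, HasDerivAt (fun s => g s j) (g' j) t := fun j =>
    (hasDerivAt_pi.mp hg) j
  have key : HasDerivAt (fun s => ∑ i, ∑ j, f s i * (M i j * g s j))
      (∑ i, ∑ j, (f' i * (M i j * g t j) + f t i * (M i j * g' j))) t := by
    apply HasDerivAt.fun_sum
    intro i _
    apply HasDerivAt.fun_sum
    intro j _
    exact (hfi i).mul ((hgj j).const_mul (M i j))
  convert key using 2 with s
  · simp [dotProduct, mulVec, Finset.mul_sum]
  · simp [dotProduct, mulVec, Finset.mul_sum, Finset.sum_add_distrib]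

lemma dot_swap {n m : ℕ} (M : Matrix (Fin n) (Fin m) ℝ) (a : Fin n → ℝ) (b : Fin m → ℝ) :
    a ⬝ᵥ M.mulVec b = b ⬝ᵥ Mᵀ.mulVec a := by
  rw [dotProduct_mulVec, ← mulVec_transpose, dotProduct_comm]

/-- Energy conservation for the 2D semi-discretization when both SBP matrices vanish
    (e.g. periodic coupling in both directions). -/
theorem stmt9 {NP NU NV : ℕ}
    (AP : Matrix (Fin NP) (Fin NP) ℝ) (AU : Matrix (Fin NU) (Fin NU) ℝ)
    (AV : Matrix (Fin NV) (Fin NV) ℝ)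
    (hAP : AP.PosDef) (hAU : AU.PosDef) (hAV : AV.PosDef)
    (DxU : Matrix (Fin NP) (Fin NU) ℝ) (DyV : Matrix (Fin NP) (Fin NV) ℝ)
    (DxP : Matrix (Fin NU) (Fin NP) ℝ) (DyP : Matrix (Fin NV) (Fin NP) ℝ)
    (hQy : AP * DyV + (AV * DyP)ᵀ = 0)
    (hQx : AP * DxU + (AU * DxP)ᵀ = 0)
    (P : ℝ → Fin NP → ℝ) (U : ℝ → Fin NU → ℝ) (V : ℝ → Fin NV → ℝ)
    (P' : ℝ → Fin NP → ℝ) (U' : ℝ → Fin NU → ℝ) (V' : ℝ → Fin NV → ℝ)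
    (hP : ∀ t, HasDerivAt P (P' t) t) (hU : ∀ t, HasDerivAt U (U' t) t)
    (hV : ∀ t, HasDerivAt V (V' t) t)
    (hPode : ∀ t, AP.mulVec (P' t) = -((AP * DxU).mulVec (U t)) - (AP * DyV).mulVec (V t))
    (hUode : ∀ t, AU.mulVec (U' t) = -((AU * DxP).mulVec (P t)))
    (hVode : ∀ t, AV.mulVec (V' t) = -((AV * DyP).mulVec (P t)))
    (E : ℝ → ℝ)
    (hE : ∀ t, E t = (1/2) * (P t ⬝ᵥ AP.mulVec (P t) + U t ⬝ᵥ AU.mulVec (U t)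
      + V t ⬝ᵥ AV.mulVec (V t))) :
    ∀ t s, E t = E s := by
  have hAPs : APᵀ = AP := hAP.1.eq
  have hAUs : AUᵀ = AU := hAU.1.eq
  have hAVs : AVᵀ = AV := hAV.1.eq
  have hQx' : (AU * DxP)ᵀ = -(AP * DxU) := by
    have := hQx
    rw [add_comm] at this
    exact eq_neg_of_add_eq_zero_left this
  have hQy' : (AV * DyP)ᵀ = -(AP * DyV) := by
    have := hQy
    rw [add_comm] at this
    exact eq_neg_of_add_eq_zero_left this
  have hEfun : E = fun t => (1/2) * (P t ⬝ᵥ AP.mulVec (P t) + U t ⬝ᵥ AU.mulVec (U t)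
      + V t ⬝ᵥ AV.mulVec (V t)) := funext hE
  have hE0 : ∀ t, HasDerivAt E 0 t := by
    intro t
    have h1 := dot_hasDerivAt AP (hP t) (hP t)
    have h2 := dot_hasDerivAt AU (hU t) (hU t)
    have h3 := dot_hasDerivAt AV (hV t) (hV t)
    have hD := ((h1.add h2).add h3).const_mul (1/2 : ℝ)
    rw [hEfun]
    convert hD using 1
    case e'_4 => rfl
    case e'_5 => rfl
    case e'_8 => rfl
    -- show 0 = (1/2) * (...)
    have sP : P' t ⬝ᵥ AP.mulVec (P t) = P t ⬝ᵥ AP.mulVec (P' t) := by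
      rw [dot_swap, hAPs]
    have sU : U' t ⬝ᵥ AU.mulVec (U t) = U t ⬝ᵥ AU.mulVec (U' t) := by
      rw [dot_swap, hAUs]
    have sV : V' t ⬝ᵥ AV.mulVec (V t) = V t ⬝ᵥ AV.mulVec (V' t) := by
      rw [dot_swap, hAVs]
    rw [sP, sU, sV, hPode, hUode, hVode]
    have eU : U t ⬝ᵥ -((AU * DxP).mulVec (P t)) = -(P t ⬝ᵥ (AU * DxP)ᵀ.mulVec (U t)) := by
      rw [dotProduct_neg, dot_swap]
    have eV : V t ⬝ᵥ -((AV * DyP).mulVec (P t)) = -(P t ⬝ᵥ (AV * DyP)ᵀ.mulVec (V t)) := by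
      rw [dotProduct_neg, dot_swap]
    rw [eU, eV, hQx', hQy']
    simp [dotProduct_sub, dotProduct_neg, neg_mulVec]
    ring
  intro t s
  have : ∀ x y, E x = E y :=
    is_const_of_deriv_eq_zero (fun x => (hE0 x).differentiableAt)
      (fun x => (hE0 x).deriv)
  exact this t s
end

section
/- For the 2D SAT-penalized system imposing free-surface boundary conditions with penalty parameters σ_L = −1, σ_R = 1, σ_B = −1, σ_T = 1, the discrete energy E = (1/2)(PᵀA_P P + UᵀA_U U + VᵀA_V V) is conserved: dE/dt = 0. -/
open Matrix
open scoped Kronecker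

private lemma quad_hasDeriv {ι : Type*} [Fintype ι] (A : Matrix ι ι ℝ)
    (X : ℝ → ι → ℝ) (X' : ι → ℝ) (t : ℝ) (hX : HasDerivAt X X' t) :
    HasDerivAt (fun s => X s ⬝ᵥ A.mulVec (X s))
      (X' ⬝ᵥ A.mulVec (X t) + X t ⬝ᵥ A.mulVec X') t := by
  have hXi : ∀ i, HasDerivAt (fun s => X s i) (X' i) t := fun i =>
    ((ContinuousLinearMap.proj (R := ℝ) (φ := fun _ : ι => ℝ) i).hasFDerivAt).comp_hasDerivAt t hX
  have h : HasDerivAt (fun s => ∑ i, X s i * ∑ j, A i j * X s j)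
      (∑ i, (X' i * ∑ j, A i j * X t j + X t i * ∑ j, A i j * X' j)) t := by
    apply HasDerivAt.fun_sum
    intro i _
    exact (hXi i).mul (HasDerivAt.fun_sum fun j _ => (hXi j).const_mul (A i j))
  simpa [dotProduct, mulVec, Finset.sum_add_distrib] using h

private lemma dot_symm {ι : Type*} [Fintype ι] (A : Matrix ι ι ℝ) (hA : A.IsSymm)
    (x y : ι → ℝ) : x ⬝ᵥ A.mulVec y = y ⬝ᵥ A.mulVec x := by
  rw [dotProduct_mulVec, ← mulVec_transpose, hA, dotProduct_comm]

private lemma dot_trans {ι κ : Type*} [Fintype ι] [Fintype κ] (M : Matrix ι κ ℝ)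
    (u : ι → ℝ) (v : κ → ℝ) : u ⬝ᵥ M.mulVec v = v ⬝ᵥ Mᵀ.mulVec u := by
  rw [dotProduct_mulVec, ← mulVec_transpose, dotProduct_comm]

private lemma kron_neg {a b c d : Type*} (A : Matrix a b ℝ) (B : Matrix c d ℝ) :
    A ⊗ₖ (-B) = -(A ⊗ₖ B) := by
  ext ⟨i, j⟩ ⟨k, l⟩
  simp [kroneckerMap_apply]

private lemma penX {kp ku m : ℕ} (ayp : Matrix (Fin m) (Fin m) ℝ) (hs : ayp.IsSymm)
    (e : Fin kp → ℝ) (p : Fin ku → ℝ) (P : Fin kp × Fin m → ℝ) (U : Fin ku × Fin m → ℝ) :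
    P ⬝ᵥ ((vecMulVec e p) ⊗ₖ ayp).mulVec U =
    U ⬝ᵥ (fun q : Fin ku × Fin m => p q.1 * ayp.mulVec (fun j => e ⬝ᵥ fun i => P (i, j)) q.2) := by
  simp only [dotProduct, mulVec, kroneckerMap_apply, vecMulVec_apply, Fintype.sum_prod_type,
    Finset.mul_sum, Finset.sum_mul]
  conv_lhs => enter [2, i]; rw [Finset.sum_comm]
  conv_lhs => rw [Finset.sum_comm]
  conv_lhs => enter [2, k, 2, i]; rw [Finset.sum_comm]
  conv_lhs => enter [2, k]; rw [Finset.sum_comm]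
  conv_lhs => enter [2, k, 2, l]; rw [Finset.sum_comm]
  refine Finset.sum_congr rfl fun k _ => Finset.sum_congr rfl fun l _ =>
    Finset.sum_congr rfl fun j _ => Finset.sum_congr rfl fun i _ => ?_
  rw [hs.apply l j]
  ring

private lemma penY {kp m n : ℕ} (axp : Matrix (Fin kp) (Fin kp) ℝ) (hs : axp.IsSymm)
    (e : Fin m → ℝ) (p : Fin n → ℝ) (P : Fin kp × Fin m → ℝ) (V : Fin kp × Fin n → ℝ) :
    P ⬝ᵥ (axp ⊗ₖ (vecMulVec e p)).mulVec V =
    V ⬝ᵥ (fun q : Fin kp × Fin n => p q.2 * axp.mulVec (fun i => e ⬝ᵥ fun j => P (i, j)) q.1) := by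
  simp only [dotProduct, mulVec, kroneckerMap_apply, vecMulVec_apply, Fintype.sum_prod_type,
    Finset.mul_sum, Finset.sum_mul]
  -- LHS order: i j k l ; RHS order: k l i j
  conv_lhs => enter [2, i]; rw [Finset.sum_comm]
  conv_lhs => rw [Finset.sum_comm]
  conv_lhs => enter [2, k, 2, i]; rw [Finset.sum_comm]
  conv_lhs => enter [2, k]; rw [Finset.sum_comm]
  refine Finset.sum_congr rfl fun k _ => Finset.sum_congr rfl fun l _ =>
    Finset.sum_congr rfl fun i _ => Finset.sum_congr rfl fun j _ => ?_
  rw [hs.apply k i]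
  ring

/-- Energy conservation for the 2D SAT-penalized free-surface system with
    σL = -1, σR = 1, σB = -1, σT = 1. -/
theorem stmt10 {kp ku m n : ℕ}
    (axp : Matrix (Fin kp) (Fin kp) ℝ) (axu : Matrix (Fin ku) (Fin ku) ℝ)
    (ayp : Matrix (Fin m) (Fin m) ℝ) (ayv : Matrix (Fin n) (Fin n) ℝ)
    (haxp : axp.IsDiag ∧ axp.PosDef) (haxu : axu.IsDiag ∧ axu.PosDef)
    (hayp : ayp.IsDiag ∧ ayp.PosDef) (hayv : ayv.IsDiag ∧ ayv.PosDef)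
    (DxU : Matrix (Fin kp × Fin m) (Fin ku × Fin m) ℝ)
    (DyV : Matrix (Fin kp × Fin m) (Fin kp × Fin n) ℝ)
    (DxP : Matrix (Fin ku × Fin m) (Fin kp × Fin m) ℝ)
    (DyP : Matrix (Fin kp × Fin n) (Fin kp × Fin m) ℝ)
    (exL exR : Fin kp → ℝ) (pxL pxR : Fin ku → ℝ)
    (eyL eyR : Fin m → ℝ) (pyL pyR : Fin n → ℝ)
    (hQx : (axp ⊗ₖ ayp) * DxU + ((axu ⊗ₖ ayp) * DxP)ᵀ =
      -(vecMulVec exL pxL ⊗ₖ ayp) + vecMulVec exR pxR ⊗ₖ ayp)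
    (hQy : (axp ⊗ₖ ayp) * DyV + ((axp ⊗ₖ ayv) * DyP)ᵀ =
      axp ⊗ₖ (-vecMulVec eyL pyL + vecMulVec eyR pyR))
    (σL σR σB σT : ℝ) (hσ : σL = -1 ∧ σR = 1 ∧ σB = -1 ∧ σT = 1)
    (P : ℝ → Fin kp × Fin m → ℝ) (U : ℝ → Fin ku × Fin m → ℝ)
    (V : ℝ → Fin kp × Fin n → ℝ)
    (P' : ℝ → Fin kp × Fin m → ℝ) (U' : ℝ → Fin ku × Fin m → ℝ)
    (V' : ℝ → Fin kp × Fin n → ℝ)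
    (hP : ∀ t, HasDerivAt P (P' t) t) (hU : ∀ t, HasDerivAt U (U' t) t)
    (hV : ∀ t, HasDerivAt V (V' t) t)
    (hPode : ∀ t, (axp ⊗ₖ ayp).mulVec (P' t) =
      -(((axp ⊗ₖ ayp) * DxU).mulVec (U t)) - ((axp ⊗ₖ ayp) * DyV).mulVec (V t))
    (hUode : ∀ t, (axu ⊗ₖ ayp).mulVec (U' t) = -(((axu ⊗ₖ ayp) * DxP).mulVec (P t))
      + σL • (fun q : Fin ku × Fin m =>
          pxL q.1 * ayp.mulVec (fun j => exL ⬝ᵥ fun i => P t (i, j)) q.2)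
      + σR • (fun q : Fin ku × Fin m =>
          pxR q.1 * ayp.mulVec (fun j => exR ⬝ᵥ fun i => P t (i, j)) q.2))
    (hVode : ∀ t, (axp ⊗ₖ ayv).mulVec (V' t) = -(((axp ⊗ₖ ayv) * DyP).mulVec (P t))
      + σB • (fun q : Fin kp × Fin n =>
          pyL q.2 * axp.mulVec (fun i => eyL ⬝ᵥ fun j => P t (i, j)) q.1)
      + σT • (fun q : Fin kp × Fin n =>
          pyR q.2 * axp.mulVec (fun i => eyR ⬝ᵥ fun j => P t (i, j)) q.1))
    (E : ℝ → ℝ)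
    (hE : ∀ t, E t = (1/2) * (P t ⬝ᵥ (axp ⊗ₖ ayp).mulVec (P t)
      + U t ⬝ᵥ (axu ⊗ₖ ayp).mulVec (U t) + V t ⬝ᵥ (axp ⊗ₖ ayv).mulVec (V t))) :
    ∀ t, HasDerivAt E 0 t := by
  intro t
  obtain ⟨hσL, hσR, hσB, hσT⟩ := hσ
  have hAPs : (axp ⊗ₖ ayp).IsSymm := (haxp.1.kronecker hayp.1).isSymm
  have hAUs : (axu ⊗ₖ ayp).IsSymm := (haxu.1.kronecker hayp.1).isSymm
  have hAVs : (axp ⊗ₖ ayv).IsSymm := (haxp.1.kronecker hayv.1).isSymm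
  have hEfun : E = fun s => (1/2) * (P s ⬝ᵥ (axp ⊗ₖ ayp).mulVec (P s)
      + U s ⬝ᵥ (axu ⊗ₖ ayp).mulVec (U s) + V s ⬝ᵥ (axp ⊗ₖ ayv).mulVec (V s)) := funext hE
  have hD := (((quad_hasDeriv (axp ⊗ₖ ayp) P (P' t) t (hP t)).add
      (quad_hasDeriv (axu ⊗ₖ ayp) U (U' t) t (hU t))).add
      (quad_hasDeriv (axp ⊗ₖ ayv) V (V' t) t (hV t))).const_mul (1/2 : ℝ)
  rw [hEfun]
  -- abbreviations
  set a := P t ⬝ᵥ ((axp ⊗ₖ ayp) * DxU).mulVec (U t) with ha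
  set b := U t ⬝ᵥ ((axu ⊗ₖ ayp) * DxP).mulVec (P t) with hb
  set c := P t ⬝ᵥ ((axp ⊗ₖ ayp) * DyV).mulVec (V t) with hc
  set d := V t ⬝ᵥ ((axp ⊗ₖ ayv) * DyP).mulVec (P t) with hd
  set SL := U t ⬝ᵥ (fun q : Fin ku × Fin m =>
      pxL q.1 * ayp.mulVec (fun j => exL ⬝ᵥ fun i => P t (i, j)) q.2) with hSL
  set SR := U t ⬝ᵥ (fun q : Fin ku × Fin m =>
      pxR q.1 * ayp.mulVec (fun j => exR ⬝ᵥ fun i => P t (i, j)) q.2) with hSR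
  set SB := V t ⬝ᵥ (fun q : Fin kp × Fin n =>
      pyL q.2 * axp.mulVec (fun i => eyL ⬝ᵥ fun j => P t (i, j)) q.1) with hSB
  set ST := V t ⬝ᵥ (fun q : Fin kp × Fin n =>
      pyR q.2 * axp.mulVec (fun i => eyR ⬝ᵥ fun j => P t (i, j)) q.1) with hST
  have e1 : P t ⬝ᵥ (axp ⊗ₖ ayp).mulVec (P' t) = -a - c := by
    rw [hPode t]; simp [dotProduct_sub, dotProduct_neg, ha, hc]
  have e2 : U t ⬝ᵥ (axu ⊗ₖ ayp).mulVec (U' t) = -b + σL * SL + σR * SR := by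
    rw [hUode t]; simp [dotProduct_add, dotProduct_neg, dotProduct_smul, hb, hSL, hSR,
      smul_eq_mul]
  have e3 : V t ⬝ᵥ (axp ⊗ₖ ayv).mulVec (V' t) = -d + σB * SB + σT * ST := by
    rw [hVode t]; simp [dotProduct_add, dotProduct_neg, dotProduct_smul, hd, hSB, hST,
      smul_eq_mul]
  have kx : a + b = -SL + SR := by
    have hb' : b = P t ⬝ᵥ (((axu ⊗ₖ ayp) * DxP)ᵀ).mulVec (U t) := by
      rw [hb, dot_trans]
    have : a + b = P t ⬝ᵥ ((axp ⊗ₖ ayp) * DxU + ((axu ⊗ₖ ayp) * DxP)ᵀ).mulVec (U t) := by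
      rw [ha, hb', add_mulVec, dotProduct_add]
    rw [this, hQx, add_mulVec, neg_mulVec, dotProduct_add, dotProduct_neg,
      penX ayp hayp.1.isSymm exL pxL (P t) (U t), penX ayp hayp.1.isSymm exR pxR (P t) (U t),
      ← hSL, ← hSR]
  have ky : c + d = -SB + ST := by
    have hd' : d = P t ⬝ᵥ (((axp ⊗ₖ ayv) * DyP)ᵀ).mulVec (V t) := by
      rw [hd, dot_trans]
    have : c + d = P t ⬝ᵥ ((axp ⊗ₖ ayp) * DyV + ((axp ⊗ₖ ayv) * DyP)ᵀ).mulVec (V t) := by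
      rw [hc, hd', add_mulVec, dotProduct_add]
    rw [this, hQy, kronecker_add, kron_neg, add_mulVec, neg_mulVec, dotProduct_add,
      dotProduct_neg, penY axp haxp.1.isSymm eyL pyL (P t) (V t),
      penY axp haxp.1.isSymm eyR pyR (P t) (V t), ← hSB, ← hST]
  have hderiv0 : (1/2 : ℝ) * ((P' t ⬝ᵥ (axp ⊗ₖ ayp).mulVec (P t)
      + P t ⬝ᵥ (axp ⊗ₖ ayp).mulVec (P' t)
      + (U' t ⬝ᵥ (axu ⊗ₖ ayp).mulVec (U t) + U t ⬝ᵥ (axu ⊗ₖ ayp).mulVec (U' t)))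
      + (V' t ⬝ᵥ (axp ⊗ₖ ayv).mulVec (V t) + V t ⬝ᵥ (axp ⊗ₖ ayv).mulVec (V' t))) = 0 := by
    rw [dot_symm _ hAPs (P' t) (P t), dot_symm _ hAUs (U' t) (U t),
      dot_symm _ hAVs (V' t) (V t), e1, e2, e3, hσL, hσR, hσB, hσT]
    nlinarith [kx, ky]
  rw [hderiv0] at hD
  exact hD
end

section
/- Let C_P, C_U, C_V be diagonal positive definite coefficient matrices and A_P, A_U, A_V diagonal positive definite norm matrices. If Q_y := A_P D_y^V + (A_V D_y^P)ᵀ = 0 and Q_x := A_P D_x^U + (A_U D_x^P)ᵀ = 0, then along any solution of C_P A_P P' = −A_P D_x^U U − A_P D_y^V V, C_U A_U U' = −A_U D_x^P P, C_V A_V V' = −A_V D_y^P P, the weighted energy E = (1/2)(Pᵀ C_P A_P P + Uᵀ C_U A_U U + Vᵀ C_V A_V V) is constant; i.e., the heterogeneous-media discretization inherits energy conservation from the constant-coefficient case. -/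
open Matrix

lemma isDiag_mul {n : ℕ} {A B : Matrix (Fin n) (Fin n) ℝ}
    (hA : A.IsDiag) (hB : B.IsDiag) : (A * B).IsDiag := by
  intro i j hij
  simp only [Matrix.mul_apply]
  apply Finset.sum_eq_zero
  intro k _
  by_cases hk : k = i
  · subst hk; rw [hB hij, mul_zero]
  · rw [hA (fun h => hk h.symm), zero_mul]

lemma quad_hasDerivAt {n : ℕ} (M : Matrix (Fin n) (Fin n) ℝ) (x x' : ℝ → Fin n → ℝ)
    (hx : ∀ t, HasDerivAt x (x' t) t) (t : ℝ) :
    HasDerivAt (fun t => x t ⬝ᵥ M.mulVec (x t))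
      (x' t ⬝ᵥ M.mulVec (x t) + x t ⬝ᵥ M.mulVec (x' t)) t := by
  have hxi : ∀ i s, HasDerivAt (fun s => x s i) (x' s i) s := by
    intro i s
    exact (hasDerivAt_pi.mp (hx s)) i
  have key : HasDerivAt (fun s => ∑ i, x s i * ∑ j, M i j * x s j)
      (∑ i, (x' t i * ∑ j, M i j * x t j + x t i * ∑ j, M i j * x' t j)) t := by
    apply HasDerivAt.fun_sum
    intro i _
    exact (hxi i t).mul (HasDerivAt.fun_sum fun j _ => (hxi j t).const_mul (M i j))
  have e1 : (fun s => ∑ i, x s i * ∑ j, M i j * x s j)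
      = fun s => x s ⬝ᵥ M.mulVec (x s) := by
    funext s; simp [dotProduct, Matrix.mulVec]
  have e2 : (∑ i, (x' t i * ∑ j, M i j * x t j + x t i * ∑ j, M i j * x' t j))
      = x' t ⬝ᵥ M.mulVec (x t) + x t ⬝ᵥ M.mulVec (x' t) := by
    simp [dotProduct, Matrix.mulVec, Finset.sum_add_distrib]
  rw [e1, e2] at key
  exact key

lemma symm_flip {n : ℕ} {M : Matrix (Fin n) (Fin n) ℝ} (hM : M.IsSymm)
    (v w : Fin n → ℝ) : v ⬝ᵥ M.mulVec w = w ⬝ᵥ M.mulVec v := by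
  rw [Matrix.dotProduct_mulVec, ← Matrix.mulVec_transpose, hM.eq, dotProduct_comm]

lemma flip_transpose {m n : ℕ} (A : Matrix (Fin m) (Fin n) ℝ)
    (v : Fin n → ℝ) (w : Fin m → ℝ) : v ⬝ᵥ Aᵀ.mulVec w = w ⬝ᵥ A.mulVec v := by
  rw [Matrix.mulVec_transpose, dotProduct_comm, ← Matrix.dotProduct_mulVec]

/-- Energy conservation for the heterogeneous-media semi-discretization. -/
theorem stmt19 {NP NU NV : ℕ}
    (CP AP : Matrix (Fin NP) (Fin NP) ℝ) (CU AU : Matrix (Fin NU) (Fin NU) ℝ)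
    (CV AV : Matrix (Fin NV) (Fin NV) ℝ)
    (hCP : CP.IsDiag ∧ CP.PosDef) (hAP : AP.IsDiag ∧ AP.PosDef)
    (hCU : CU.IsDiag ∧ CU.PosDef) (hAU : AU.IsDiag ∧ AU.PosDef)
    (hCV : CV.IsDiag ∧ CV.PosDef) (hAV : AV.IsDiag ∧ AV.PosDef)
    (DxU : Matrix (Fin NP) (Fin NU) ℝ) (DyV : Matrix (Fin NP) (Fin NV) ℝ)
    (DxP : Matrix (Fin NU) (Fin NP) ℝ) (DyP : Matrix (Fin NV) (Fin NP) ℝ)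
    (hQy : AP * DyV + (AV * DyP)ᵀ = 0)
    (hQx : AP * DxU + (AU * DxP)ᵀ = 0)
    (P : ℝ → Fin NP → ℝ) (U : ℝ → Fin NU → ℝ) (V : ℝ → Fin NV → ℝ)
    (P' : ℝ → Fin NP → ℝ) (U' : ℝ → Fin NU → ℝ) (V' : ℝ → Fin NV → ℝ)
    (hP : ∀ t, HasDerivAt P (P' t) t) (hU : ∀ t, HasDerivAt U (U' t) t)
    (hV : ∀ t, HasDerivAt V (V' t) t)
    (hPode : ∀ t, (CP * AP).mulVec (P' t) =
      -((AP * DxU).mulVec (U t)) - (AP * DyV).mulVec (V t))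
    (hUode : ∀ t, (CU * AU).mulVec (U' t) = -((AU * DxP).mulVec (P t)))
    (hVode : ∀ t, (CV * AV).mulVec (V' t) = -((AV * DyP).mulVec (P t)))
    (E : ℝ → ℝ)
    (hE : ∀ t, E t = (1/2) * (P t ⬝ᵥ (CP * AP).mulVec (P t)
      + U t ⬝ᵥ (CU * AU).mulVec (U t) + V t ⬝ᵥ (CV * AV).mulVec (V t))) :
    ∀ t s, E t = E s := by
  have hsP : (CP * AP : Matrix _ _ ℝ).IsSymm := (isDiag_mul hCP.1 hAP.1).isSymm
  have hsU : (CU * AU : Matrix _ _ ℝ).IsSymm := (isDiag_mul hCU.1 hAU.1).isSymm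
  have hsV : (CV * AV : Matrix _ _ ℝ).IsSymm := (isDiag_mul hCV.1 hAV.1).isSymm
  have hE' : ∀ t, HasDerivAt E 0 t := by
    intro t
    have hEfun : E = fun t => (1/2) * (P t ⬝ᵥ (CP * AP).mulVec (P t)
        + U t ⬝ᵥ (CU * AU).mulVec (U t) + V t ⬝ᵥ (CV * AV).mulVec (V t)) :=
      funext hE
    have hD : HasDerivAt (fun t => (1/2) * (P t ⬝ᵥ (CP * AP).mulVec (P t)
        + U t ⬝ᵥ (CU * AU).mulVec (U t) + V t ⬝ᵥ (CV * AV).mulVec (V t)))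
        ((1/2) * ((P' t ⬝ᵥ (CP * AP).mulVec (P t) + P t ⬝ᵥ (CP * AP).mulVec (P' t))
          + (U' t ⬝ᵥ (CU * AU).mulVec (U t) + U t ⬝ᵥ (CU * AU).mulVec (U' t))
          + (V' t ⬝ᵥ (CV * AV).mulVec (V t) + V t ⬝ᵥ (CV * AV).mulVec (V' t)))) t :=
      (((quad_hasDerivAt _ P P' hP t).add (quad_hasDerivAt _ U U' hU t)).add
        (quad_hasDerivAt _ V V' hV t)).const_mul (1/2)
    have hzero : ((1/2 : ℝ) * ((P' t ⬝ᵥ (CP * AP).mulVec (P t) + P t ⬝ᵥ (CP * AP).mulVec (P' t))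
          + (U' t ⬝ᵥ (CU * AU).mulVec (U t) + U t ⬝ᵥ (CU * AU).mulVec (U' t))
          + (V' t ⬝ᵥ (CV * AV).mulVec (V t) + V t ⬝ᵥ (CV * AV).mulVec (V' t)))) = 0 := by
      rw [symm_flip hsP, symm_flip hsU, symm_flip hsV, hPode, hUode, hVode]
      have hxc : P t ⬝ᵥ (AP * DxU).mulVec (U t) + U t ⬝ᵥ (AU * DxP).mulVec (P t) = 0 := by
        rw [← flip_transpose (AU * DxP) (P t) (U t), ← dotProduct_add,
          ← Matrix.add_mulVec, hQx, Matrix.zero_mulVec, dotProduct_zero]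
      have hyc : P t ⬝ᵥ (AP * DyV).mulVec (V t) + V t ⬝ᵥ (AV * DyP).mulVec (P t) = 0 := by
        rw [← flip_transpose (AV * DyP) (P t) (V t), ← dotProduct_add,
          ← Matrix.add_mulVec, hQy, Matrix.zero_mulVec, dotProduct_zero]
      simp only [dotProduct_sub, dotProduct_neg]
      linarith
    rw [hEfun]
    rw [← hzero]
    exact hD
  intro t s
  exact is_const_of_deriv_eq_zero (fun x => (hE' x).differentiableAt)
    (fun x => (hE' x).deriv) t s
end
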